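/- arXiv:1608.00139 — 5 statements merged into one kernel-verified Lean document; each statement's English description precedes it below -/
import Mathlib

section
/- Let R₁ be an N×N matrix with entries in {0,1} and 0 < ε ≤ 1/(1 + ‖R₁‖_∞). Let R₂⁽ᵏ⁾ be given by R₂⁽⁰⁾ = 0, R₂⁽ᵏ⁺¹⁾ = min₁(R₁ + R₁ R₂⁽ᵏ⁾), and S⁽ᵏ⁾ by S⁽⁰⁾ = 0, S⁽ᵏ⁺¹⁾ = ε(R₁ + R₁ S⁽ᵏ⁾). Then for all k and all indices i,j: (R₂⁽ᵏ⁾)_{ij} = 1 if and only if (S⁽ᵏ⁾)_{ij} > 0. -/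
open Matrix

/-- entrywise `min₁(t) = min(t,1)` -/
noncomputable def min1M {N : ℕ} (A : Matrix (Fin N) (Fin N) ℝ) :
    Matrix (Fin N) (Fin N) ℝ := Matrix.of fun i j => min (A i j) 1

/-- `‖A‖_∞`: maximum absolute row sum. -/
noncomputable def normInf {N : ℕ} [NeZero N] (A : Matrix (Fin N) (Fin N) ℝ) : ℝ :=
  Finset.univ.sup' Finset.univ_nonempty fun i => ∑ j, |A i j|

theorem iterations_agree_on_support {N : ℕ} [NeZero N]
    (R1 : Matrix (Fin N) (Fin N) ℝ)
    (hR1 : ∀ i j, R1 i j = 0 ∨ R1 i j = 1)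
    (ε : ℝ) (hε0 : 0 < ε) (hε1 : ε ≤ 1 / (1 + normInf R1))
    (R2 : ℕ → Matrix (Fin N) (Fin N) ℝ)
    (hR20 : R2 0 = 0)
    (hR2step : ∀ k, R2 (k + 1) = min1M (R1 + R1 * R2 k))
    (S : ℕ → Matrix (Fin N) (Fin N) ℝ)
    (hS0 : S 0 = 0)
    (hSstep : ∀ k, S (k + 1) = ε • (R1 + R1 * S k)) :
    ∀ k i j, R2 k i j = 1 ↔ 0 < S k i j := by
  have hR1nn : ∀ i j, 0 ≤ R1 i j := by
    intro i j; rcases hR1 i j with h | h <;> simp [h]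
  have main : ∀ k, (∀ i j, R2 k i j = 0 ∨ R2 k i j = 1) ∧
      (∀ i j, 0 ≤ S k i j) ∧ (∀ i j, R2 k i j = 1 ↔ 0 < S k i j) := by
    intro k
    induction k with
    | zero => simp [hR20, hS0]
    | succ k ih =>
      obtain ⟨h01, hSnn, hiff⟩ := ih
      have hR2nn : ∀ i j, 0 ≤ R2 k i j := by
        intro i j; rcases h01 i j with h | h <;> simp [h]
      -- entries of R2 (k+1)
      have hR2succ : ∀ i j, R2 (k+1) i j
          = min (R1 i j + ∑ l, R1 i l * R2 k l j) 1 := by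
        intro i j
        rw [hR2step k]
        simp [min1M, Matrix.add_apply, Matrix.mul_apply]
      have hSsucc : ∀ i j, S (k+1) i j
          = ε * (R1 i j + ∑ l, R1 i l * S k l j) := by
        intro i j
        rw [hSstep k]
        simp [Matrix.add_apply, Matrix.mul_apply]
      -- the key dichotomy for t
      have hkey : ∀ i j, (R1 i j + ∑ l, R1 i l * R2 k l j = 0) ∨
          (1 ≤ R1 i j + ∑ l, R1 i l * R2 k l j) := by
        intro i j
        have hsumnn : (0:ℝ) ≤ ∑ l, R1 i l * R2 k l j :=
          Finset.sum_nonneg fun l _ => mul_nonneg (hR1nn i l) (hR2nn l j)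
        rcases hR1 i j with h | h
        · by_cases hex : ∃ l, R1 i l = 1 ∧ R2 k l j = 1
          · obtain ⟨l, hl1, hl2⟩ := hex
            right
            have : (1:ℝ) ≤ ∑ l, R1 i l * R2 k l j := by
              have := Finset.single_le_sum
                (f := fun l => R1 i l * R2 k l j)
                (fun l _ => mul_nonneg (hR1nn i l) (hR2nn l j))
                (Finset.mem_univ l)
              simpa [hl1, hl2] using this
            linarith [this]
          · left
            have : ∑ l, R1 i l * R2 k l j = 0 := by
              apply Finset.sum_eq_zero
              intro l _
              rcases hR1 i l with h1 | h1
              · simp [h1]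
              · rcases h01 l j with h2 | h2
                · simp [h2]
                · exact absurd ⟨l, h1, h2⟩ hex
            simp [h, this]
        · right; linarith
      -- positivity characterization of S (k+1)
      have hSpos : ∀ i j, 0 < S (k+1) i j ↔
          (0 < R1 i j ∨ ∃ l, 0 < R1 i l * S k l j) := by
        intro i j
        rw [hSsucc]
        have hsumnn : (0:ℝ) ≤ ∑ l, R1 i l * S k l j :=
          Finset.sum_nonneg fun l _ => mul_nonneg (hR1nn i l) (hSnn l j)
        constructor
        · intro hpos
          have ht : 0 < R1 i j + ∑ l, R1 i l * S k l j := by nlinarith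
          by_cases h : 0 < R1 i j
          · exact Or.inl h
          · have hR0 : R1 i j = 0 := le_antisymm (not_lt.1 h) (hR1nn i j)
            right
            have hsum : 0 < ∑ l, R1 i l * S k l j := by
              rw [hR0, zero_add] at ht; exact ht
            by_contra hc
            push_neg at hc
            have : ∑ l, R1 i l * S k l j = 0 :=
              Finset.sum_eq_zero fun l _ =>
                le_antisymm (hc l) (mul_nonneg (hR1nn i l) (hSnn l j))
            rw [this] at hsum; exact lt_irrefl 0 hsum
        · intro h
          have : 0 < R1 i j + ∑ l, R1 i l * S k l j := by
            rcases h with h | ⟨l, hl⟩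
            · have := hR1nn i j; linarith
            · have : 0 < ∑ l, R1 i l * S k l j :=
                Finset.sum_pos' (fun l _ => mul_nonneg (hR1nn i l) (hSnn l j))
                  ⟨l, Finset.mem_univ l, hl⟩
              have := hR1nn i j; linarith
          positivity
      refine ⟨?_, ?_, ?_⟩
      · intro i j
        rw [hR2succ]
        rcases hkey i j with h | h
        · left; rw [h]; simp
        · right; exact min_eq_right h ▸ by simp [min_eq_right, h]
      · intro i j
        rw [hSsucc]
        have hsumnn : (0:ℝ) ≤ ∑ l, R1 i l * S k l j :=
          Finset.sum_nonneg fun l _ => mul_nonneg (hR1nn i l) (hSnn l j)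
        have := hR1nn i j
        positivity
      · intro i j
        rw [hR2succ, hSpos]
        constructor
        · intro h1
          rcases hkey i j with h | h
          · rw [h] at h1; norm_num at h1
          · -- 1 ≤ t : show R1 i j = 1 or ∃ l ...
            rcases hR1 i j with h0 | h0
            · right
              -- sum must be positive
              have hsum : 0 < ∑ l, R1 i l * R2 k l j := by
                rw [h0, zero_add] at h; linarith
              obtain ⟨l, _, hl⟩ := Finset.exists_lt_of_sum_lt (f := fun _ => (0:ℝ))
                (by simpa using hsum)
              refine ⟨l, ?_⟩
              have hR1l : R1 i l = 1 := by
                rcases hR1 i l with h' | h'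
                · rw [h'] at hl; simp at hl
                · exact h'
              have hR2l : R2 k l j = 1 := by
                rcases h01 l j with h' | h'
                · rw [h'] at hl; simp at hl
                · exact h'
              have := (hiff l j).1 hR2l
              rw [hR1l, one_mul]; exact this
            · left; rw [h0]; norm_num
        · intro h2
          rcases hkey i j with h | h
          · exfalso
            rcases h2 with hp | ⟨l, hl⟩
            · have : R1 i j = 1 := by
                rcases hR1 i j with h' | h'
                · rw [h'] at hp; simp at hp
                · exact h'
              have hsumnn : (0:ℝ) ≤ ∑ l, R1 i l * R2 k l j :=
                Finset.sum_nonneg fun l _ => mul_nonneg (hR1nn i l) (hR2nn l j)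
              rw [this] at h; linarith
            · have hR1l : R1 i l = 1 := by
                rcases hR1 i l with h' | h'
                · rw [h'] at hl; simp at hl
                · exact h'
              have hSl : 0 < S k l j := by
                rw [hR1l, one_mul] at hl; exact hl
              have hR2l : R2 k l j = 1 := (hiff l j).2 hSl
              have hsum : (1:ℝ) ≤ ∑ l, R1 i l * R2 k l j := by
                have := Finset.single_le_sum
                  (f := fun l => R1 i l * R2 k l j)
                  (fun l _ => mul_nonneg (hR1nn i l) (hR2nn l j))
                  (Finset.mem_univ l)
                simpa [hR1l, hR2l] using this
              have := hR1nn i j; linarith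
          · exact min_eq_right h
  intro k i j
  exact (main k).2.2 i j
end

section
/- Let R₁ be an N×N matrix with entries in {0,1}, 0 < ε ≤ 1/(1 + ‖R₁‖_∞), and let R₂⁽ᵏ⁾, S⁽ᵏ⁾ be as in the two iterations R₂⁽ᵏ⁺¹⁾ = min₁(R₁ + R₁ R₂⁽ᵏ⁾) and S⁽ᵏ⁺¹⁾ = ε(R₁ + R₁ S⁽ᵏ⁾), both starting at 0. Then for all k and all i,j: if (R₂⁽ᵏ⁾)_{ij} = 1 then (S⁽ᵏ⁾)_{ij} ≥ εᵏ. -/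
open Matrix

theorem iterations_eps_pow_lower_bound {N : ℕ} [NeZero N]
    (R1 : Matrix (Fin N) (Fin N) ℝ)
    (hR1 : ∀ i j, R1 i j = 0 ∨ R1 i j = 1)
    (ε : ℝ) (hε0 : 0 < ε) (hε1 : ε ≤ 1 / (1 + normInf R1))
    (R2 : ℕ → Matrix (Fin N) (Fin N) ℝ)
    (hR20 : R2 0 = 0)
    (hR2step : ∀ k, R2 (k + 1) = min1M (R1 + R1 * R2 k))
    (S : ℕ → Matrix (Fin N) (Fin N) ℝ)
    (hS0 : S 0 = 0)
    (hSstep : ∀ k, S (k + 1) = ε • (R1 + R1 * S k)) :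
    ∀ k i j, R2 k i j = 1 → ε ^ k ≤ S k i j := by

  have hR1nn : ∀ i j, 0 ≤ R1 i j := fun i j => by rcases hR1 i j with h|h <;> simp [h]
  -- normInf nonneg, hence ε ≤ 1
  have hn0 : 0 ≤ normInf R1 := by
    have i : Fin N := ⟨0, Nat.pos_of_ne_zero (NeZero.ne N)⟩
    have h1 : (∑ j, |R1 i j|) ≤ normInf R1 :=
      Finset.le_sup' (fun i => ∑ j, |R1 i j|) (Finset.mem_univ i)
    have h2 : 0 ≤ ∑ j, |R1 i j| := Finset.sum_nonneg fun j _ => abs_nonneg _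
    linarith
  have hε1' : ε ≤ 1 := by
    have : (1:ℝ) / (1 + normInf R1) ≤ 1 := by
      rw [div_le_one (by linarith)]; linarith
    linarith
  have hS_nn : ∀ k i j, 0 ≤ S k i j := by
    intro k
    induction k with
    | zero => intro i j; simp [hS0]
    | succ k ih =>
      intro i j
      rw [hSstep k]
      simp only [Matrix.smul_apply, Matrix.add_apply, Matrix.mul_apply, smul_eq_mul]
      have hs : 0 ≤ ∑ l, R1 i l * S k l j :=
        Finset.sum_nonneg fun l _ => mul_nonneg (hR1nn i l) (ih l j)
      exact mul_nonneg hε0.le (add_nonneg (hR1nn i j) hs)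
  have hR2_01 : ∀ k i j, R2 k i j = 0 ∨ R2 k i j = 1 := by
    intro k
    induction k with
    | zero => intro i j; left; simp [hR20]
    | succ k ih =>
      intro i j
      rw [hR2step k]
      simp only [min1M, Matrix.of_apply, Matrix.add_apply, Matrix.mul_apply]
      have hR2nn : ∀ l, 0 ≤ R2 k l j := fun l => by rcases ih l j with h|h <;> simp [h]
      have key : (R1 i j + ∑ l, R1 i l * R2 k l j) = 0 ∨
          1 ≤ R1 i j + ∑ l, R1 i l * R2 k l j := by
        have hsnn : 0 ≤ ∑ l, R1 i l * R2 k l j :=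
          Finset.sum_nonneg fun l _ => mul_nonneg (hR1nn i l) (hR2nn l)
        by_cases h0 : R1 i j = 1
        · right; rw [h0]; linarith
        · have hR1ij0 : R1 i j = 0 := (hR1 i j).resolve_right h0
          by_cases h1 : ∀ l, R1 i l * R2 k l j = 0
          · left
            rw [hR1ij0, Finset.sum_eq_zero fun l _ => h1 l]; ring
          · right
            push_neg at h1
            obtain ⟨l, hl⟩ := h1
            have hl1 : R1 i l * R2 k l j = 1 := by
              rcases hR1 i l with a|a <;> rcases ih l j with b|b <;>
                simp [a, b] at hl ⊢
            have hle : R1 i l * R2 k l j ≤ ∑ l, R1 i l * R2 k l j :=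
              Finset.single_le_sum (fun x _ => mul_nonneg (hR1nn i x) (hR2nn x))
                (Finset.mem_univ l)
            rw [hl1] at hle
            linarith [hR1nn i j]
      rcases key with h|h
      · left; rw [h]; simp
      · right; exact min_eq_right h
  intro k
  induction k with
  | zero =>
    intro i j h
    rw [hR20] at h
    simp at h
  | succ k ih =>
    intro i j h
    rw [hR2step k] at h
    simp only [min1M, Matrix.of_apply, Matrix.add_apply, Matrix.mul_apply] at h
    have ht : 1 ≤ R1 i j + ∑ l, R1 i l * R2 k l j := by
      by_contra hc
      push_neg at hc
      rw [min_eq_left hc.le] at h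
      linarith
    rw [hSstep k]
    simp only [Matrix.smul_apply, Matrix.add_apply, Matrix.mul_apply, smul_eq_mul]
    have hsumS_nn : 0 ≤ ∑ l, R1 i l * S k l j :=
      Finset.sum_nonneg fun l _ => mul_nonneg (hR1nn i l) (hS_nn k l j)
    by_cases hc : R1 i j = 1
    · have hεk : ε ^ k ≤ 1 := pow_le_one₀ hε0.le hε1'
      calc ε ^ (k+1) = ε * ε ^ k := by rw [pow_succ]; ring
        _ ≤ ε * 1 := mul_le_mul_of_nonneg_left hεk hε0.le
        _ ≤ ε * (R1 i j + ∑ l, R1 i l * S k l j) := by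
            apply mul_le_mul_of_nonneg_left _ hε0.le
            rw [hc]; linarith
    · have hR1ij0 : R1 i j = 0 := (hR1 i j).resolve_right hc
      have hex : ∃ l, R1 i l = 1 ∧ R2 k l j = 1 := by
        by_contra hno
        push_neg at hno
        have hz : ∀ l ∈ Finset.univ, R1 i l * R2 k l j = 0 := by
          intro l _
          rcases hR1 i l with a|a
          · simp [a]
          · rcases hR2_01 k l j with b|b
            · simp [b]
            · exact absurd b (hno l a)
        rw [Finset.sum_eq_zero hz, hR1ij0] at ht
        linarith
      obtain ⟨l, ha, hb⟩ := hex
      have hSk := ih l j hb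
      have hsum_ge : ε ^ k ≤ ∑ l, R1 i l * S k l j := by
        have hle := Finset.single_le_sum (f := fun l => R1 i l * S k l j)
          (fun x _ => mul_nonneg (hR1nn i x) (hS_nn k x j)) (Finset.mem_univ l)
        simp only [ha, one_mul] at hle
        linarith
      calc ε ^ (k+1) = ε * ε ^ k := by rw [pow_succ]; ring
        _ ≤ ε * (R1 i j + ∑ l, R1 i l * S k l j) := by
            apply mul_le_mul_of_nonneg_left _ hε0.le
            linarith [hR1nn i j]
end

section
/- Let R₁ be an N×N matrix with entries in {0,1} and 0 < ε ≤ 1/(1 + ‖R₁‖_∞). Let S* be the least nonnegative solution of S = ε(R₁ + R₁S). Define R* ∈ {0,1}^{N×N} by (R*)_{ij} = 1 if (S*)_{ij} > 0 and 0 otherwise. Then R* is the least solution of R = min₁(R₁ + R₁R) among {0,1}-matrices, in the entrywise order. -/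
open Matrix

theorem threshold_of_least_solution {N : ℕ} [NeZero N]
    (R1 : Matrix (Fin N) (Fin N) ℝ)
    (hR1 : ∀ i j, R1 i j = 0 ∨ R1 i j = 1)
    (ε : ℝ) (hε0 : 0 < ε) (hε1 : ε ≤ 1 / (1 + normInf R1))
    (Sstar : Matrix (Fin N) (Fin N) ℝ)
    (hSnonneg : ∀ i j, 0 ≤ Sstar i j)
    (hSsol : Sstar = ε • (R1 + R1 * Sstar))
    (hSleast : ∀ S' : Matrix (Fin N) (Fin N) ℝ,
      (∀ i j, 0 ≤ S' i j) → S' = ε • (R1 + R1 * S') →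
      ∀ i j, Sstar i j ≤ S' i j)
    (Rstar : Matrix (Fin N) (Fin N) ℝ)
    (hRstar : ∀ i j, Rstar i j = if 0 < Sstar i j then 1 else 0) :
    Rstar = min1M (R1 + R1 * Rstar) ∧
      ∀ R : Matrix (Fin N) (Fin N) ℝ,
        (∀ i j, R i j = 0 ∨ R i j = 1) →
        R = min1M (R1 + R1 * R) →
        ∀ i j, Rstar i j ≤ R i j := by
  have hR1nn : ∀ i j, (0:ℝ) ≤ R1 i j := fun i j => by rcases hR1 i j with h | h <;> simp [h]
  have hninf0 : 0 ≤ normInf R1 := by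
    obtain ⟨i⟩ : Nonempty (Fin N) := Finset.univ_nonempty.to_subtype.map (fun x => x.1) |>.elim
      (fun x => ⟨x⟩)
    calc (0:ℝ) ≤ ∑ j, |R1 i j| := Finset.sum_nonneg fun _ _ => abs_nonneg _
    _ ≤ normInf R1 := by
      simp only [normInf]
      exact Finset.le_sup' (fun i => ∑ j, |R1 i j|) (Finset.mem_univ i)
  have hεn : ε * normInf R1 ≤ 1 - ε := by
    have h1 : (0:ℝ) < 1 + normInf R1 := by linarith
    have := (le_div_iff₀ h1).mp hε1
    nlinarith
  have hε1' : ε ≤ 1 := by nlinarith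
  have hrow : ∀ i, ∑ k, R1 i k ≤ normInf R1 := by
    intro i
    have : ∑ k, R1 i k = ∑ k, |R1 i k| :=
      Finset.sum_congr rfl fun k _ => (abs_of_nonneg (hR1nn i k)).symm
    rw [this]
    simp only [normInf]
    exact Finset.le_sup' (fun i => ∑ j, |R1 i j|) (Finset.mem_univ i)
  have hS : ∀ i j, Sstar i j = ε * (R1 i j + ∑ k, R1 i k * Sstar k j) := by
    intro i j
    conv_lhs => rw [hSsol]
    simp [Matrix.mul_apply, Matrix.add_apply]
  have hRstar01 : ∀ i j, Rstar i j = 0 ∨ Rstar i j = 1 := by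
    intro i j; rw [hRstar]; split <;> simp
  constructor
  · funext i j
    have hterm_nn : ∀ k, 0 ≤ R1 i k * Rstar k j := by
      intro k
      rcases hRstar01 k j with h | h <;> rcases hR1 i k with h' | h' <;> simp [h, h']
    have hmin : min1M (R1 + R1 * Rstar) i j
        = min (R1 i j + ∑ k, R1 i k * Rstar k j) 1 := by
      simp [min1M, Matrix.mul_apply, Matrix.add_apply]
    rw [hRstar, hmin]
    by_cases hpos : 0 < Sstar i j
    · rw [if_pos hpos]
      have hX : 0 < R1 i j + ∑ k, R1 i k * Sstar k j := by
        have h := hS i j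
        nlinarith
      have h1le : 1 ≤ R1 i j + ∑ k, R1 i k * Rstar k j := by
        rcases hR1 i j with h0 | h0
        · -- R1 i j = 0, so the S-sum is positive, pick k
          have hsumpos : 0 < ∑ k, R1 i k * Sstar k j := by rw [h0] at hX; linarith
          have : ∃ k ∈ Finset.univ, 0 < R1 i k * Sstar k j := by
            by_contra hc
            push_neg at hc
            have : ∑ k, R1 i k * Sstar k j ≤ 0 :=
              Finset.sum_nonpos fun k _ => hc k (Finset.mem_univ k)
            linarith
          obtain ⟨k, -, hk⟩ := this
          have hRk : R1 i k = 1 := by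
            rcases hR1 i k with h | h
            · rw [h] at hk; simp at hk
            · exact h
          have hSk : 0 < Sstar k j := by rw [hRk, one_mul] at hk; exact hk
          have hRsk : Rstar k j = 1 := by rw [hRstar, if_pos hSk]
          have : (1:ℝ) ≤ ∑ k, R1 i k * Rstar k j := by
            have := Finset.single_le_sum (f := fun k => R1 i k * Rstar k j)
              (fun k _ => hterm_nn k) (Finset.mem_univ k)
            simp only [hRk, hRsk, one_mul] at this
            simpa using this
          rw [h0]; linarith
        · have hs : 0 ≤ ∑ k, R1 i k * Rstar k j := Finset.sum_nonneg fun k _ => hterm_nn k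
          rw [h0]; linarith
      exact (min_eq_right h1le).symm
    · rw [if_neg hpos]
      have hS0 : Sstar i j = 0 := le_antisymm (not_lt.mp hpos) (hSnonneg i j)
      have hX : R1 i j + ∑ k, R1 i k * Sstar k j = 0 := by
        have h := hS i j
        rw [hS0] at h
        have := h.symm
        rcases mul_eq_zero.mp this with h' | h'
        · exact absurd h' (ne_of_gt hε0)
        · exact h'
      have hXnn : ∀ k, 0 ≤ R1 i k * Sstar k j := fun k =>
        mul_nonneg (hR1nn i k) (hSnonneg k j)
      have hsumS : ∑ k, R1 i k * Sstar k j = 0 := by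
        have h1 : 0 ≤ ∑ k, R1 i k * Sstar k j := Finset.sum_nonneg fun k _ => hXnn k
        have h2 := hR1nn i j
        linarith
      have hR1ij : R1 i j = 0 := by
        have h1 : 0 ≤ ∑ k, R1 i k * Sstar k j := Finset.sum_nonneg fun k _ => hXnn k
        linarith [hR1nn i j]
      have heach : ∀ k, R1 i k * Sstar k j = 0 := by
        intro k
        have := (Finset.sum_eq_zero_iff_of_nonneg (fun k _ => hXnn k)).mp hsumS
        exact this k (Finset.mem_univ k)
      have hsum0 : ∑ k, R1 i k * Rstar k j = 0 := by
        apply Finset.sum_eq_zero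
        intro k _
        rcases hR1 i k with h | h
        · rw [h, zero_mul]
        · have : Sstar k j = 0 := by
            have := heach k; rw [h, one_mul] at this; exact this
          rw [hRstar, if_neg (by rw [this]; exact lt_irrefl 0), mul_zero]
      rw [hR1ij, hsum0]
      norm_num
  · intro R hR01 hRfix i j
    have hRentry : ∀ a b, R a b = min (R1 a b + ∑ k, R1 a k * R k b) 1 := by
      intro a b
      conv_lhs => rw [hRfix]
      simp [min1M, Matrix.mul_apply, Matrix.add_apply]
    -- key: if R i j = 0 then Sstar i j = 0 (fixed column j)
    have key : ∀ i, R i j = 0 → Sstar i j = 0 := by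
      set d : Fin N → ℝ := fun i => if R i j = 0 then Sstar i j else 0 with hd
      set m := Finset.univ.sup' Finset.univ_nonempty d with hm
      have hdnn : ∀ i, 0 ≤ d i := by
        intro i; simp only [hd]; split
        · exact hSnonneg i j
        · exact le_refl 0
      have hdm : ∀ i, d i ≤ m := fun i => Finset.le_sup' d (Finset.mem_univ i)
      obtain ⟨i0, -, hi0⟩ := Finset.exists_mem_eq_sup' Finset.univ_nonempty d
      have hmnn : 0 ≤ m := le_trans (hdnn i0) (hdm i0)
      have hstep : ∀ i, d i ≤ (1 - ε) * m := by
        intro i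
        by_cases h : R i j = 0
        · simp only [hd, if_pos h]
          have heq := hRentry i j
          rw [h] at heq
          have htnn : ∀ k, 0 ≤ R1 i k * R k j := by
            intro k
            rcases hR1 i k with h' | h' <;> rcases hR01 k j with h'' | h'' <;> simp [h', h'']
          have hsnn : 0 ≤ ∑ k, R1 i k * R k j := Finset.sum_nonneg fun k _ => htnn k
          have ht0 : R1 i j + ∑ k, R1 i k * R k j = 0 := by
            rcases le_or_gt (R1 i j + ∑ k, R1 i k * R k j) 1 with h' | h'
            · rw [min_eq_left h'] at heq; exact heq.symm
            · rw [min_eq_right (le_of_lt h')] at heq; exact absurd heq.symm one_ne_zero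
          have hR1ij0 : R1 i j = 0 := by linarith [hR1nn i j]
          have hs0 : ∑ k, R1 i k * R k j = 0 := by linarith [hR1nn i j]
          have heach : ∀ k, R1 i k * R k j = 0 := by
            intro k
            exact (Finset.sum_eq_zero_iff_of_nonneg (fun k _ => htnn k)).mp hs0 k
              (Finset.mem_univ k)
          -- bound each term of Sstar equation
          have hbd : ∀ k, R1 i k * Sstar k j ≤ R1 i k * m := by
            intro k
            rcases hR1 i k with h' | h'
            · simp [h']
            · have hRkj : R k j = 0 := by
                have := heach k; rw [h', one_mul] at this; exact this
              have : Sstar k j = d k := by simp [hd, hRkj]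
              rw [h', one_mul, one_mul, this]
              exact hdm k
          have hsum_bd : ∑ k, R1 i k * Sstar k j ≤ (∑ k, R1 i k) * m := by
            rw [Finset.sum_mul]
            exact Finset.sum_le_sum fun k _ => hbd k
          have hSij := hS i j
          rw [hR1ij0, zero_add] at hSij
          have h2 : (∑ k, R1 i k) * m ≤ normInf R1 * m :=
            mul_le_mul_of_nonneg_right (hrow i) hmnn
          calc Sstar i j = ε * ∑ k, R1 i k * Sstar k j := hSij
          _ ≤ ε * (normInf R1 * m) := by
              apply mul_le_mul_of_nonneg_left _ (le_of_lt hε0)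
              linarith
          _ = (ε * normInf R1) * m := by ring
          _ ≤ (1 - ε) * m := mul_le_mul_of_nonneg_right hεn hmnn
        · simp only [hd, if_neg h]
          nlinarith
      have hmle : m ≤ (1 - ε) * m := by
        calc m = d i0 := hi0
        _ ≤ (1 - ε) * m := hstep i0
      have hm0 : m = 0 := by nlinarith
      intro i hij
      have h1 : d i ≤ 0 := hm0 ▸ hdm i
      have h2 : d i = Sstar i j := by simp [hd, hij]
      rw [h2] at h1
      exact le_antisymm h1 (hSnonneg i j)
    rcases hR01 i j with h | h
    · rw [hRstar, if_neg (by rw [key i h]; exact lt_irrefl 0), h]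
    · rw [h]
      rcases hRstar01 i j with h' | h' <;> rw [h'] <;> norm_num
end

section
/- Let R₁ be the adjacency matrix of a finite directed graph on N vertices (entries in {0,1}). Then the least {0,1}-matrix solution R₂* of R₂ = min₁(R₁ + R₁R₂) satisfies: (R₂*)_{ij} = 1 if and only if there is a directed path of length ≥ 1 from vertex i to vertex j in the graph, i.e., R₂* is the adjacency matrix of the transitive closure of the edge relation. -/
open Matrix

theorem least_solution_is_transitive_closure {N : ℕ}
    (R1 : Matrix (Fin N) (Fin N) ℝ)
    (hR1 : ∀ i j, R1 i j = 0 ∨ R1 i j = 1)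
    (R2star : Matrix (Fin N) (Fin N) ℝ)
    (hR2star01 : ∀ i j, R2star i j = 0 ∨ R2star i j = 1)
    (hsol : R2star = min1M (R1 + R1 * R2star))
    (hleast : ∀ R : Matrix (Fin N) (Fin N) ℝ,
      (∀ i j, R i j = 0 ∨ R i j = 1) →
      R = min1M (R1 + R1 * R) →
      ∀ i j, R2star i j ≤ R i j) :
    ∀ i j, R2star i j = 1 ↔ Relation.TransGen (fun a b => R1 a b = 1) i j := by
  classical
  set TG := Relation.TransGen (fun a b => R1 a b = 1) with hTGdef
  have h01nonneg : ∀ (A : Matrix (Fin N) (Fin N) ℝ),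
      (∀ i j, A i j = 0 ∨ A i j = 1) → ∀ i j, (0:ℝ) ≤ A i j := by
    intro A hA i j; rcases hA i j with h | h <;> simp [h]
  have hmulnonneg : ∀ (R : Matrix (Fin N) (Fin N) ℝ),
      (∀ i j, R i j = 0 ∨ R i j = 1) → ∀ i j, (0:ℝ) ≤ (R1 * R) i j := by
    intro R hR i j
    rw [Matrix.mul_apply]
    exact Finset.sum_nonneg fun t _ =>
      mul_nonneg (h01nonneg R1 hR1 i t) (h01nonneg R hR t j)
  have hterm : ∀ (R : Matrix (Fin N) (Fin N) ℝ),
      (∀ i j, R i j = 0 ∨ R i j = 1) → ∀ i j k, R1 i k * R k j ≤ (R1 * R) i j := by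
    intro R hR i j k
    rw [Matrix.mul_apply]
    exact Finset.single_le_sum
      (fun t _ => mul_nonneg (h01nonneg R1 hR1 i t) (h01nonneg R hR t j))
      (Finset.mem_univ k)
  have hone : ∀ (R : Matrix (Fin N) (Fin N) ℝ),
      R = min1M (R1 + R1 * R) →
      ∀ i j, (1:ℝ) ≤ R1 i j + (R1 * R) i j → R i j = 1 := by
    intro R hsolR i j hge
    have := congrArg (fun M => M i j) hsolR
    simp only [min1M, Matrix.of_apply, Matrix.add_apply] at this
    rw [this, min_eq_right hge]
  -- any solution dominates the transitive closure
  have key : ∀ R : Matrix (Fin N) (Fin N) ℝ,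
      (∀ i j, R i j = 0 ∨ R i j = 1) → R = min1M (R1 + R1 * R) →
      ∀ i j, TG i j → R i j = 1 := by
    intro R hR hsolR i j htg
    induction htg using Relation.TransGen.head_induction_on with
    | single h =>
        rename_i a
        refine hone R hsolR a j ?_
        have := hmulnonneg R hR a j
        rw [h]; linarith
    | head hac htg hRc =>
        refine hone R hsolR _ j ?_
        rename_i a c
        have h1 : R1 a c * R c j ≤ (R1 * R) a j := hterm R hR a j c
        rw [hac, hRc] at h1
        have h2 := h01nonneg R1 hR1 a j
        simp at h1
        linarith
  -- the transitive closure matrix is a solution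
  set RTC : Matrix (Fin N) (Fin N) ℝ :=
    Matrix.of (fun i j => if TG i j then (1:ℝ) else 0) with hRTCdef
  have hRTC01 : ∀ i j, RTC i j = 0 ∨ RTC i j = 1 := by
    intro i j; by_cases h : TG i j <;> simp [hRTCdef, h]
  have hsolTC : RTC = min1M (R1 + R1 * RTC) := by
    ext i j
    simp only [min1M, Matrix.of_apply, Matrix.add_apply, hRTCdef]
    by_cases h : TG i j
    · rw [if_pos h]
      have hsplit : R1 i j = 1 ∨ ∃ c, R1 i c = 1 ∧ TG c j := by
        induction h using Relation.TransGen.head_induction_on with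
        | single h1 => exact Or.inl h1
        | head hac htg _ => exact Or.inr ⟨_, hac, htg⟩
      rcases hsplit with h1 | ⟨c, hic, hcj⟩
      · have := hmulnonneg RTC hRTC01 i j
        rw [min_eq_right (by rw [h1]; linarith)]
      · have h1 : R1 i c * RTC c j ≤ (R1 * RTC) i j := hterm RTC hRTC01 i j c
        have h2 : RTC c j = 1 := by simp [hRTCdef, hcj]
        rw [hic, h2] at h1
        have h3 := h01nonneg R1 hR1 i j
        simp at h1
        rw [min_eq_right (by linarith)]
    · rw [if_neg h]
      have h1 : R1 i j = 0 := by
        rcases hR1 i j with h1 | h1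
        · exact h1
        · exact absurd (Relation.TransGen.single (r := fun a b => R1 a b = 1) h1) h
      have h2 : (R1 * RTC) i j = 0 := by
        rw [Matrix.mul_apply]
        apply Finset.sum_eq_zero
        intro k _
        rcases hR1 i k with hk | hk
        · rw [hk, zero_mul]
        · have : RTC k j = 0 := by
            have : ¬ TG k j := fun hkj => h (Relation.TransGen.head (r := fun a b => R1 a b = 1) hk hkj)
            simp [hRTCdef, this]
          rw [this, mul_zero]
      rw [h1, h2]
      norm_num
  intro i j
  constructor
  · intro h
    have hle := hleast RTC hRTC01 hsolTC i j
    rw [h] at hle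
    by_contra htg
    have : RTC i j = 0 := by simp [hRTCdef, htg]
    rw [this] at hle
    linarith
  · intro htg
    exact key R2star hR2star01 hsol i j htg
end

section
/- Let R₁ be an N×N {0,1}-matrix. Consider the two-sided Boolean iteration R⁽⁰⁾ = 0, R⁽ᵏ⁺¹⁾ = min₁(I + R₁ R⁽ᵏ⁾ R₁ᵀ). Its limit R* (which exists since the sequence is entrywise increasing and bounded by 𝟙, with {0,1} entries) satisfies: (R*)_{ij} = 1 if and only if there exists n ≥ 0 and a vertex w such that there are directed paths of length n from i to w and from j to w in the graph with adjacency matrix R₁ — i.e., R* encodes the same-generation relation. -/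
open Matrix Filter Topology

/-- There is a directed path of length `n` from `a` to `b` in the graph
with adjacency matrix `R1` (a path of length 0 means `a = b`). -/
def hasPath {N : ℕ} (R1 : Matrix (Fin N) (Fin N) ℝ) (n : ℕ) (a b : Fin N) : Prop :=
  ∃ v : Fin (n + 1) → Fin N,
    v 0 = a ∧ v (Fin.last n) = b ∧
    ∀ t : Fin n, R1 (v t.castSucc) (v t.succ) = 1

lemma hasPath_zero {N : ℕ} (R1 : Matrix (Fin N) (Fin N) ℝ) (a b : Fin N) :
    hasPath R1 0 a b ↔ a = b := by
  constructor
  · rintro ⟨v, h0, hl, -⟩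
    have : (Fin.last 0) = (0 : Fin 1) := rfl
    rw [this] at hl
    rw [← h0, ← hl]
  · rintro rfl
    exact ⟨fun _ => a, rfl, rfl, fun t => t.elim0⟩

lemma hasPath_succ {N : ℕ} (R1 : Matrix (Fin N) (Fin N) ℝ) (n : ℕ) (a b : Fin N) :
    hasPath R1 (n + 1) a b ↔ ∃ c, R1 a c = 1 ∧ hasPath R1 n c b := by
  constructor
  · rintro ⟨v, h0, hl, hs⟩
    refine ⟨v 1, ?_, fun t => v t.succ, rfl, ?_, fun t => ?_⟩
    · have := hs 0
      simpa [h0, Fin.castSucc_zero] using this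
    · show v (Fin.last n).succ = b
      rw [Fin.succ_last]
      exact hl
    · have := hs t.succ
      rwa [← Fin.succ_castSucc] at this
  · rintro ⟨c, hac, v, h0, hl, hs⟩
    refine ⟨Fin.cases a v, ?_, ?_, fun t => ?_⟩
    · simp
    · rw [← Fin.succ_last]
      simp only [Fin.cases_succ]
      exact hl
    · induction t using Fin.cases with
      | zero =>
        show R1 (Fin.cases a v (Fin.castSucc 0)) (Fin.cases a v (Fin.succ 0)) = 1
        rw [show (Fin.castSucc (0 : Fin (n+1))) = 0 from rfl, Fin.cases_zero,
          Fin.cases_succ, h0]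
        exact hac
      | succ s =>
        show R1 (Fin.cases a v s.succ.castSucc) (Fin.cases a v s.succ.succ) = 1
        rw [← Fin.succ_castSucc, Fin.cases_succ, Fin.cases_succ]
        exact hs s

lemma char_lemma {N : ℕ} (R1 : Matrix (Fin N) (Fin N) ℝ)
    (hR1 : ∀ i j, R1 i j = 0 ∨ R1 i j = 1)
    (R : ℕ → Matrix (Fin N) (Fin N) ℝ)
    (h0 : R 0 = 0)
    (hstep : ∀ k, R (k + 1) = min1M (1 + R1 * R k * R1ᵀ)) :
    ∀ k i j, (R k i j = 0 ∨ R k i j = 1) ∧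
      (R k i j = 1 ↔ ∃ n < k, ∃ w, hasPath R1 n i w ∧ hasPath R1 n j w) := by
  intro k
  induction k with
  | zero =>
    intro i j
    simp [h0, Matrix.zero_apply]
  | succ k ih =>
    intro i j
    set T : Prop := ∃ a b, R1 i a = 1 ∧ R k a b = 1 ∧ R1 j b = 1 with hTdef
    have nn : ∀ a b, 0 ≤ R1 i a * R k a b * R1 j b := by
      intro a b
      have h1 : 0 ≤ R1 i a := by rcases hR1 i a with h | h <;> simp [h]
      have h2 : 0 ≤ R k a b := by rcases (ih a b).1 with h | h <;> simp [h]
      have h3 : 0 ≤ R1 j b := by rcases hR1 j b with h | h <;> simp [h]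
      positivity
    have hSapp : (R1 * R k * R1ᵀ) i j = ∑ b, ∑ a, R1 i a * R k a b * R1 j b := by
      simp [Matrix.mul_apply, Matrix.transpose_apply, Finset.sum_mul]
    have hS0 : ¬ T → (R1 * R k * R1ᵀ) i j = 0 := by
      intro hT
      rw [hSapp]
      refine Finset.sum_eq_zero fun b _ => Finset.sum_eq_zero fun a _ => ?_
      rcases hR1 i a with h1 | h1
      · simp [h1]
      rcases (ih a b).1 with h2 | h2
      · simp [h2]
      rcases hR1 j b with h3 | h3
      · simp [h3]
      exact absurd ⟨a, b, h1, h2, h3⟩ hT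
    have hS1 : T → 1 ≤ (R1 * R k * R1ᵀ) i j := by
      rintro ⟨a, b, h1, h2, h3⟩
      rw [hSapp]
      have hterm : R1 i a * R k a b * R1 j b = 1 := by rw [h1, h2, h3]; ring
      calc (1 : ℝ) = R1 i a * R k a b * R1 j b := hterm.symm
        _ ≤ ∑ a', R1 i a' * R k a' b * R1 j b :=
            Finset.single_le_sum (fun a' _ => nn a' b) (Finset.mem_univ a)
        _ ≤ ∑ b', ∑ a', R1 i a' * R k a' b' * R1 j b' :=
            Finset.single_le_sum
              (fun b' _ => Finset.sum_nonneg fun a' _ => nn a' b')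
              (Finset.mem_univ b)
    have hSnn : 0 ≤ (R1 * R k * R1ᵀ) i j := by
      rw [hSapp]
      exact Finset.sum_nonneg fun b _ => Finset.sum_nonneg fun a _ => nn a b
    have hentry : R (k+1) i j =
        min ((if i = j then (1:ℝ) else 0) + (R1 * R k * R1ᵀ) i j) 1 := by
      rw [hstep k]
      simp [min1M, Matrix.add_apply, Matrix.one_apply]
    classical
    have hval : R (k+1) i j = (if i = j ∨ T then (1:ℝ) else 0) := by
      by_cases hij : i = j
      · rw [hentry, if_pos hij, if_pos (Or.inl hij)]
        have : (1:ℝ) ≤ 1 + (R1 * R k * R1ᵀ) i j := by linarith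
        exact min_eq_right this
      by_cases hT : T
      · rw [hentry, if_neg hij, if_pos (Or.inr hT)]
        rw [zero_add]
        exact min_eq_right (hS1 hT)
      · rw [hentry, if_neg hij, if_neg (not_or.mpr ⟨hij, hT⟩), hS0 hT]
        norm_num
    have hiff : (i = j ∨ T) ↔ ∃ n < k + 1, ∃ w, hasPath R1 n i w ∧ hasPath R1 n j w := by
      constructor
      · rintro (rfl | ⟨a, b, h1, h2, h3⟩)
        · exact ⟨0, Nat.succ_pos _, i, (hasPath_zero R1 i i).2 rfl, (hasPath_zero R1 i i).2 rfl⟩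
        · obtain ⟨n, hn, w, hpa, hpb⟩ := (ih a b).2.mp h2
          exact ⟨n + 1, Nat.succ_lt_succ hn, w,
            (hasPath_succ R1 n i w).2 ⟨a, h1, hpa⟩,
            (hasPath_succ R1 n j w).2 ⟨b, h3, hpb⟩⟩
      · rintro ⟨n, hn, w, hpi, hpj⟩
        cases n with
        | zero =>
          left
          rw [(hasPath_zero R1 i w).1 hpi, (hasPath_zero R1 j w).1 hpj]
        | succ m =>
          obtain ⟨a, h1, hpa⟩ := (hasPath_succ R1 m i w).1 hpi
          obtain ⟨b, h3, hpb⟩ := (hasPath_succ R1 m j w).1 hpj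
          exact Or.inr ⟨a, b, h1,
            (ih a b).2.mpr ⟨m, Nat.lt_of_succ_lt_succ hn, w, hpa, hpb⟩, h3⟩
    constructor
    · by_cases h : i = j ∨ T
      · right; rw [hval, if_pos h]
      · left; rw [hval, if_neg h]
    · rw [hval]
      by_cases h : i = j ∨ T
      · rw [if_pos h]
        exact iff_of_true rfl (hiff.mp h)
      · rw [if_neg h]
        exact iff_of_false (by norm_num) (fun hr => h (hiff.mpr hr))

theorem same_generation_limit {N : ℕ}
    (R1 : Matrix (Fin N) (Fin N) ℝ)
    (hR1 : ∀ i j, R1 i j = 0 ∨ R1 i j = 1)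
    (R : ℕ → Matrix (Fin N) (Fin N) ℝ)
    (h0 : R 0 = 0)
    (hstep : ∀ k, R (k + 1) = min1M (1 + R1 * R k * R1ᵀ))
    (Rstar : Matrix (Fin N) (Fin N) ℝ)
    (hlim : Tendsto R atTop (𝓝 Rstar)) :
    ∀ i j, Rstar i j = 1 ↔
      ∃ (n : ℕ) (w : Fin N), hasPath R1 n i w ∧ hasPath R1 n j w := by
  intro i j
  have hch := char_lemma R1 hR1 R h0 hstep
  have hten : Tendsto (fun k => R k i j) atTop (𝓝 (Rstar i j)) := by
    have h1 : Tendsto (fun k => R k i) atTop (𝓝 (Rstar i)) := tendsto_pi_nhds.mp hlim i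
    exact tendsto_pi_nhds.mp h1 j
  constructor
  · intro hstar
    rw [hstar] at hten
    have hev : ∀ᶠ m in atTop, (1/2 : ℝ) < R m i j :=
      hten.eventually (eventually_gt_nhds (by norm_num))
    obtain ⟨m, hm⟩ := hev.exists
    have h1 : R m i j = 1 := by
      rcases (hch m i j).1 with h | h
      · rw [h] at hm; norm_num at hm
      · exact h
    obtain ⟨n, _, w, hpi, hpj⟩ := (hch m i j).2.mp h1
    exact ⟨n, w, hpi, hpj⟩
  · rintro ⟨n, w, hpi, hpj⟩
    have hone : Tendsto (fun k => R k i j) atTop (𝓝 (1 : ℝ)) := by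
      apply Tendsto.congr' _ tendsto_const_nhds
      filter_upwards [eventually_gt_atTop n] with m hm
      exact ((hch m i j).2.mpr ⟨n, hm, w, hpi, hpj⟩).symm
    exact tendsto_nhds_unique hten hone
end
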